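/- For all n ≥ 3, θ_n ≤ n ln(n ln n), where θ_n = ∑_{i=1}^n ln(p_i). -/

import Mathlib

noncomputable def p (n : ℕ) : ℕ := Nat.nth Nat.Prime (n - 1)

noncomputable def θ (n : ℕ) : ℝ := ∑ i ∈ Finset.Icc 1 n, Real.log (p i)

namespace Aux

open Finset

lemma p_prime (k : ℕ) : Nat.Prime (p k) := Nat.prime_nth_prime _
lemma p_pos (k : ℕ) : 0 < p k := (p_prime k).pos
lemma p_mono {k n : ℕ} (h : k ≤ n) : p k ≤ p n :=
  Nat.nth_monotone Nat.infinite_setOf_prime (by omega)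

/-- Chebyshev-type: `4^m ≤ (2m)^(π'(2m+1)+1)` -/
lemma cheb (m : ℕ) (hm : 0 < m) :
    4 ^ m ≤ (2 * m) ^ (Nat.primeCounting' (2 * m + 1) + 1) := by
  have hcb : Nat.centralBinom m = (2 * m).choose m := rfl
  have h1 : Nat.centralBinom m ≤ (2 * m) ^ Nat.primeCounting' (2 * m + 1) := by
    conv_lhs => rw [← Nat.factorization_prod_pow_eq_self (Nat.centralBinom_ne_zero m)]
    rw [Finsupp.prod]
    have hle : ∀ q ∈ (Nat.centralBinom m).factorization.support,
        q ^ (Nat.centralBinom m).factorization q ≤ 2 * m := by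
      intro q hq
      rw [hcb]
      exact Nat.pow_factorization_choose_le (by omega)
    refine le_trans (Finset.prod_le_pow_card _ _ _ hle) ?_
    apply Nat.pow_le_pow_right (by omega)
    rw [← Nat.primesBelow_card_eq_primeCounting']
    apply Finset.card_le_card
    intro q hq
    have hqp : Nat.Prime q := Nat.prime_of_mem_primeFactors (by
      rwa [← Nat.support_factorization])
    have hq2m : q ≤ 2 * m := by
      by_contra hgt
      exact (Finsupp.mem_support_iff.mp hq)
        (Nat.factorization_centralBinom_eq_zero_of_two_mul_lt (by omega))
    exact Nat.mem_primesBelow.mpr ⟨by omega, hqp⟩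
  calc 4 ^ m ≤ 2 * m * Nat.centralBinom m :=
        Nat.four_pow_le_two_mul_self_mul_centralBinom m hm
    _ ≤ 2 * m * (2 * m) ^ Nat.primeCounting' (2 * m + 1) := by
        exact Nat.mul_le_mul_left _ h1
    _ = (2 * m) ^ (Nat.primeCounting' (2 * m + 1) + 1) := by ring

/-- Key: `(p k - 1) * log 2 ≤ k * log (p k)` for `k ≥ 1`. -/
lemma key (k : ℕ) (hk : 1 ≤ k) :
    ((p k : ℝ) - 1) * Real.log 2 ≤ (k : ℝ) * Real.log (p k) := by
  rcases eq_or_lt_of_le hk with h1 | h2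
  · have : p 1 = 2 := Nat.nth_prime_zero_eq_two
    rw [← h1, this]
    norm_num
  · -- k ≥ 2
    set q := p k with hq
    have hq2 : 2 < q := by
      have : Nat.nth Nat.Prime 0 < Nat.nth Nat.Prime (k - 1) :=
        (Nat.nth_lt_nth Nat.infinite_setOf_prime).mpr (by omega)
      rwa [Nat.nth_prime_zero_eq_two] at this
    have hodd : Odd q := (p_prime k).odd_of_ne_two (by omega)
    obtain ⟨m, hm⟩ := hodd
    have hm1 : 1 ≤ m := by omega
    have hpi : Nat.primeCounting' (2 * m + 1) = k - 1 := by
      rw [show 2 * m + 1 = q by omega, hq]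
      show Nat.primeCounting' (Nat.nth Nat.Prime (k-1)) = k - 1
      exact Nat.primeCounting'_nth_eq (k - 1)
    have hnat : 4 ^ m ≤ (2 * m) ^ k := by
      have := cheb m hm1
      rw [hpi] at this
      rwa [show k - 1 + 1 = k by omega] at this
    -- cast to ℝ and take logs
    have hreal : ((4:ℝ)) ^ m ≤ ((2 * m : ℕ) : ℝ) ^ k := by
      calc ((4:ℝ))^m = ((4 ^ m : ℕ) : ℝ) := by push_cast; ring
        _ ≤ (((2 * m) ^ k : ℕ) : ℝ) := by exact_mod_cast hnat
        _ = ((2 * m : ℕ) : ℝ) ^ k := by push_cast; ring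
    have hlog : (m : ℝ) * Real.log 4 ≤ (k : ℝ) * Real.log (2 * m : ℕ) := by
      have := Real.log_le_log (by positivity) hreal
      rwa [Real.log_pow, Real.log_pow] at this
    have h2m : ((2 * m : ℕ) : ℝ) ≤ (q : ℝ) := by exact_mod_cast (by omega : 2 * m ≤ q)
    have hlog2 : Real.log ((2 * m : ℕ) : ℝ) ≤ Real.log q :=
      Real.log_le_log (by positivity) h2m
    have h4 : Real.log 4 = 2 * Real.log 2 := by
      rw [show (4:ℝ) = 2 ^ 2 by norm_num, Real.log_pow]; push_cast; ring
    have hq1 : (q : ℝ) - 1 = 2 * (m : ℝ) := by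
      have : (q : ℝ) = 2 * m + 1 := by exact_mod_cast hm
      linarith
    rw [hq1]
    calc 2 * (m:ℝ) * Real.log 2 = (m:ℝ) * Real.log 4 := by rw [h4]; ring
      _ ≤ (k : ℝ) * Real.log (2*m : ℕ) := hlog
      _ ≤ (k : ℝ) * Real.log q := by
          apply mul_le_mul_of_nonneg_left hlog2 (by positivity)

lemma log2_lb : (0.6931471803 : ℝ) ≤ Real.log 2 := le_of_lt Real.log_two_gt_d9
lemma log2_ub : Real.log 2 ≤ (0.6931471808 : ℝ) := le_of_lt Real.log_two_lt_d9

/-- `p k ≤ 9 k^2` -/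
lemma sq_bound (k : ℕ) (hk : 1 ≤ k) : (p k : ℝ) ≤ 9 * (k:ℝ)^2 := by
  rcases eq_or_lt_of_le hk with h1 | h2
  · rw [← h1, show p 1 = 2 from Nat.nth_prime_zero_eq_two]; norm_num
  by_contra hgt
  push_neg at hgt
  set q := p k with hqdef
  have hk2 : (2:ℝ) ≤ (k:ℝ) := by exact_mod_cast h2
  have hq36 : (36:ℝ) < (q:ℝ) := by nlinarith
  have hq37 : (37:ℝ) ≤ (q:ℝ) := by exact_mod_cast (by exact_mod_cast hq36 : (36:ℕ) < q)
  set s := Real.sqrt q with hs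
  have hq0 : (0:ℝ) ≤ (q:ℝ) := by positivity
  have hs2 : s ^ 2 = (q:ℝ) := Real.sq_sqrt hq0
  have hs0 : 0 < s := Real.sqrt_pos.mpr (by linarith)
  have h3k : 3 * (k:ℝ) < s := by
    nlinarith [hs2, hgt, hs0]
  have hlogq : Real.log q = 2 * Real.log s := by
    rw [← hs2, Real.log_pow]; push_cast; ring
  have hlogs : Real.log s ≤ s - 1 := Real.log_le_sub_one_of_pos hs0
  have hkey := key k hk
  rw [← hqdef, hlogq] at hkey
  -- (q-1) * log2 ≤ k * 2 * (s-1) ≤ (s/3)*2*s = (2/3) q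
  have hlog2 := log2_lb
  have hs1 : (1:ℝ) ≤ s := by nlinarith
  nlinarith [hkey, mul_le_mul_of_nonneg_left hlogs (by positivity : (0:ℝ) ≤ 2 * (k:ℝ)),
    mul_lt_mul_of_pos_right h3k hs0, hs2,
    mul_le_mul_of_nonneg_left hlog2 (by linarith : (0:ℝ) ≤ (q:ℝ) - 1)]

end Aux
namespace Aux2
open Finset Aux

lemma loglin {x c : ℝ} (hx : 0 < x) (hc : 0 < c) :
    Real.log x ≤ Real.log c + x / c - 1 := by
  have h := Real.log_le_sub_one_of_pos (show 0 < x / c by positivity)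
  rw [Real.log_div (ne_of_gt hx) (ne_of_gt hc)] at h
  linarith

lemma logadd {x y : ℝ} (hx : 0 < x) (hy : 0 < y) :
    Real.log (x + y) ≤ Real.log y + x / y := by
  have h := Real.log_le_sub_one_of_pos (show 0 < (x + y) / y by positivity)
  rw [Real.log_div (by positivity) (ne_of_gt hy)] at h
  have h2 : (x + y) / y = x / y + 1 := by field_simp
  rw [h2] at h; linarith

lemma loglb {x : ℝ} (hx : 0 < x) : 1 - 1/x ≤ Real.log x := by
  have h := Real.log_le_sub_one_of_pos (show 0 < 1/x by positivity)
  rw [Real.log_div one_ne_zero (ne_of_gt hx), Real.log_one] at h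
  linarith

lemma pow_log_le {x : ℝ} {a b : ℕ} (hx : 0 < x) (h : (2:ℝ)^a ≤ x^b) :
    (a : ℝ) * Real.log 2 ≤ (b:ℝ) * Real.log x := by
  have := Real.log_le_log (by positivity) h
  rwa [Real.log_pow, Real.log_pow] at this

lemma pow_log_ge {x : ℝ} {a b : ℕ} (hx : 0 < x) (h : x^b ≤ (2:ℝ)^a) :
    (b:ℝ) * Real.log x ≤ (a : ℝ) * Real.log 2 := by
  have := Real.log_le_log (by positivity) h
  rwa [Real.log_pow, Real.log_pow] at this

lemma log3_lb : (1.58 : ℝ) * Real.log 2 ≤ Real.log 3 := by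
  have h := pow_log_le (a := 158) (b := 100) (show (0:ℝ) < 3 by norm_num) (by norm_num)
  push_cast at h; linarith

lemma log3_ub : Real.log 3 ≤ (1.59 : ℝ) * Real.log 2 := by
  have h := pow_log_ge (a := 159) (b := 100) (show (0:ℝ) < 3 by norm_num) (by norm_num)
  push_cast at h; linarith

lemma log53_lb : (0.73 : ℝ) * Real.log 2 ≤ Real.log (5/3) := by
  have h := pow_log_le (a := 73) (b := 100) (show (0:ℝ) < 5/3 by norm_num) (by norm_num)
  push_cast at h; linarith

lemma log5_ub : Real.log 5 ≤ (2.33 : ℝ) * Real.log 2 := by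
  have h := pow_log_ge (a := 233) (b := 100) (show (0:ℝ) < 5 by norm_num) (by norm_num)
  push_cast at h; linarith

lemma log258_ub : Real.log (2.58) ≤ (1.37:ℝ) * Real.log 2 := by
  have h := pow_log_ge (a := 137) (b := 100) (show (0:ℝ) < 2.58 by norm_num) (by norm_num)
  push_cast at h; linarith

lemma log60_ub : Real.log 60 ≤ (5.91:ℝ) * Real.log 2 := by
  have h := pow_log_ge (a := 591) (b := 100) (show (0:ℝ) < 60 by norm_num) (by rw [show (2:ℝ)^591 = (2^197)^3 by rw [← pow_mul]]; norm_num)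
  push_cast at h; linarith

lemma logM_ub : Real.log 223092870 ≤ (27.8:ℝ) * Real.log 2 := by
  have h := pow_log_ge (a := 278) (b := 10) (show (0:ℝ) < 223092870 by norm_num) (by rw [show (2:ℝ)^278 = (2^139)^2 by rw [← pow_mul]]; norm_num)
  push_cast at h; linarith

lemma logF_lb : (18.4:ℝ) * Real.log 2 ≤ Real.log 362880 := by
  have h := pow_log_le (a := 184) (b := 10) (show (0:ℝ) < 362880 by norm_num) (by norm_num)
  push_cast at h; linarith

/-- `p k ≤ 3 k log(5k)` for `k ≥ 1` -/
lemma lin_bound (k : ℕ) (hk : 1 ≤ k) : (p k : ℝ) ≤ 3 * k * Real.log (5 * k) := by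
  have hk1 : (1:ℝ) ≤ (k:ℝ) := by exact_mod_cast hk
  have hq2 : (2:ℝ) ≤ (p k : ℝ) := by exact_mod_cast (p_prime k).two_le
  have hsq := sq_bound k hk
  have hlq : Real.log (p k) ≤ 2 * Real.log (3 * k) := by
    have h9 : (p k : ℝ) ≤ (3 * k)^2 := by nlinarith
    have h := Real.log_le_log (by linarith) h9
    rwa [Real.log_pow, Nat.cast_ofNat] at h
  have hkey := key k hk
  have hl2 := log2_lb
  have h3k : (1.58:ℝ) * Real.log 2 ≤ Real.log (3 * k) := by
    refine le_trans log3_lb (Real.log_le_log (by norm_num) (by nlinarith))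
  have h5k : Real.log (5 * k) = Real.log (5/3) + Real.log (3 * k) := by
    rw [← Real.log_mul (by norm_num) (by positivity)]
    norm_num; ring_nf
  have h53 := log53_lb
  have h1 : ((p k : ℝ) - 1) * Real.log 2 ≤ 2 * k * Real.log (3 * k) := by
    calc ((p k : ℝ) - 1) * Real.log 2 ≤ (k:ℝ) * Real.log (p k) := hkey
      _ ≤ 2 * k * Real.log (3 * k) := by nlinarith
  rw [h5k]
  have hlog2pos : (0:ℝ) < Real.log 2 := by linarith
  nlinarith [mul_le_mul_of_nonneg_left h53 (by positivity : (0:ℝ) ≤ 3 * (k:ℝ)),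
    mul_le_mul_of_nonneg_left h3k (by norm_num : (0:ℝ) ≤ (0.1:ℝ)),
    mul_pos (show (0:ℝ) < (k:ℝ) by linarith) hlog2pos, h3k, hk1, hl2]

lemma logn_lb {n : ℕ} (hn : 60 ≤ n) : (5.9:ℝ) * Real.log 2 ≤ Real.log n := by
  have hn1 : (60:ℝ) ≤ (n:ℝ) := by exact_mod_cast hn
  have h : ((2:ℝ))^(59:ℕ) ≤ (n:ℝ)^(10:ℕ) :=
    le_trans (by norm_num) (pow_le_pow_left₀ (by norm_num) hn1 10)
  have h2 := pow_log_le (show (0:ℝ) < n by linarith) h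
  push_cast at h2; linarith

/-- for n ≥ 60 : log (p n) + 0.07 ≤ (16/9) log n -/
lemma k4 (n : ℕ) (hn : 60 ≤ n) : Real.log (p n) + 0.07 ≤ (16/9) * Real.log n := by
  have hn1 : (60:ℝ) ≤ (n:ℝ) := by exact_mod_cast hn
  have hl2a := log2_lb
  have hl2b := log2_ub
  have hln : (5.9:ℝ) * Real.log 2 ≤ Real.log n := logn_lb hn
  have hlnpos : (0:ℝ) < Real.log n := by nlinarith
  -- log p_n ≤ log 3 + log n + log (log (5 n))
  have hp3 := lin_bound n (by omega)
  have hl5n : Real.log (5 * (n:ℝ)) = Real.log 5 + Real.log n := by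
    rw [← Real.log_mul (by norm_num) (by positivity)]
  have hl5npos : (0:ℝ) < Real.log (5 * (n:ℝ)) := by
    rw [hl5n]
    have : (0:ℝ) ≤ Real.log 5 := Real.log_nonneg (by norm_num)
    linarith
  have hlpn : Real.log (p n) ≤ Real.log 3 + Real.log n + Real.log (Real.log (5 * n)) := by
    have hp0 : (0:ℝ) < (p n : ℝ) := by exact_mod_cast p_pos n
    have h := Real.log_le_log hp0 hp3
    rw [show (3:ℝ) * n * Real.log (5*n) = 3 * (n * Real.log (5*n)) by ring,
      Real.log_mul (by norm_num) (by positivity),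
      Real.log_mul (by positivity) (by positivity)] at h
    linarith
  -- log(log 5 + log n) ≤ log(log n) + log5/log n
  have hadd : Real.log (Real.log 5 + Real.log n) ≤ Real.log (Real.log n) + Real.log 5 / Real.log n := by
    apply logadd (by nlinarith [Real.log_pos (show (1:ℝ) < 5 by norm_num)]) hlnpos
  have h5ln : Real.log 5 / Real.log n ≤ 0.396 := by
    rw [div_le_iff₀ hlnpos]
    nlinarith [log5_ub]
  -- log (log n) ≤ log 4 - 1 + log n / 4
  have hll : Real.log (Real.log n) ≤ 2 * Real.log 2 - 1 + Real.log n / 4 := by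
    have h := loglin hlnpos (show (0:ℝ) < 4 by norm_num)
    rw [show (4:ℝ) = 2^(2:ℕ) by norm_num, Real.log_pow] at h
    push_cast at h; linarith
  have hcast : Real.log (5 * (n:ℝ)) = Real.log 5 + Real.log n := hl5n
  have h3ub := log3_ub
  -- combine
  have : Real.log (p n) ≤ 1.59 * Real.log 2 + Real.log n +
      (2 * Real.log 2 - 1 + Real.log n / 4 + 0.396) := by
    have := hlpn
    rw [show ((5:ℝ) * (n:ℕ)) = (5 * (n:ℕ) : ℝ) by push_cast; ring] at hcast
    calc Real.log (p n) ≤ Real.log 3 + Real.log n + Real.log (Real.log (5 * n)) := hlpn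
      _ ≤ Real.log 3 + Real.log n + (Real.log (Real.log n) + 0.396) := by
          rw [hcast] at *
          nlinarith [hadd, h5ln]
      _ ≤ _ := by nlinarith [hll, h3ub]
  nlinarith [this, hln, hl2a, hl2b]

end Aux2
namespace Aux3
open Finset Aux Aux2

lemma sum_log_eq (n : ℕ) : ∑ i ∈ Finset.Icc 1 n, Real.log i = Real.log (Nat.factorial n) := by
  induction n with
  | zero => simp
  | succ m ih =>
    rw [Finset.sum_Icc_succ_top (by omega), ih, Nat.factorial_succ]
    rw [show ((m+1) * Nat.factorial m : ℕ) = ((m+1) * Nat.factorial m : ℕ) from rfl]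
    push_cast
    rw [Real.log_mul (by positivity) (by exact_mod_cast Nat.factorial_pos m |>.ne')]
    ring

lemma log_fact_le (n : ℕ) (hn : 1 ≤ n) :
    Real.log (Nat.factorial n) ≤ n * Real.log n - n + Real.log n + 1 := by
  induction n with
  | zero => omega
  | succ m ih =>
    rcases Nat.eq_or_lt_of_le hn with h1 | h2
    · simp [← h1]
    · have hm : 1 ≤ m := by omega
      have ihm := ih hm
      have hm0 : (0:ℝ) < (m:ℝ) := by exact_mod_cast hm
      have hm10 : (0:ℝ) < (m:ℝ) + 1 := by linarith
      have hfact : Real.log ((Nat.factorial (m+1)) : ℕ) = Real.log (Nat.factorial m) + Real.log ((m:ℝ)+1) := by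
        rw [Nat.factorial_succ]
        push_cast
        rw [Real.log_mul (by positivity) (by exact_mod_cast Nat.factorial_pos m |>.ne')]
        ring
      -- (m+1)(log(m+1) - log m) ≥ 1
      have hstep : 1 ≤ ((m:ℝ)+1) * (Real.log ((m:ℝ)+1) - Real.log m) := by
        have h := loglb (show (0:ℝ) < ((m:ℝ)+1)/m by positivity)
        rw [Real.log_div (by positivity) (by positivity)] at h
        have h2 : 1 - (m:ℝ)/((m:ℝ)+1) = 1/((m:ℝ)+1) := by field_simp; ring
        have h3 : (1:ℝ)/(((m:ℝ)+1)/m) = m/((m:ℝ)+1) := by field_simp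
        rw [h3] at h
        have h4 : 1/((m:ℝ)+1) ≤ Real.log ((m:ℝ)+1) - Real.log m := by linarith
        calc (1:ℝ) = ((m:ℝ)+1) * (1/((m:ℝ)+1)) := by field_simp
          _ ≤ ((m:ℝ)+1) * (Real.log ((m:ℝ)+1) - Real.log m) := by
              apply mul_le_mul_of_nonneg_left h4 (by positivity)
      have : Real.log ((Nat.factorial (m+1)) : ℕ) ≤ (m+1) * Real.log ((m:ℝ)+1) - (m+1) + Real.log ((m:ℝ)+1) + 1 := by
        rw [hfact]
        nlinarith [Real.log_le_log hm0 (show (m:ℝ) ≤ (m:ℝ)+1 by linarith)]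
      push_cast
      push_cast at this
      linarith

lemma theta_split (n : ℕ) (hn : 9 ≤ n) :
    θ n = θ 9 + ∑ i ∈ Finset.Ioc 9 n, Real.log (p i) := by
  rw [θ, θ, show (Finset.Icc 1 n) = Finset.Ioc 0 n by rw [← Finset.Icc_add_one_left_eq_Ioc, zero_add],
    show (Finset.Icc 1 9) = Finset.Ioc 0 9 by rw [← Finset.Icc_add_one_left_eq_Ioc, zero_add]]
  rw [← Finset.sum_Ioc_consecutive _ (by omega : 0 ≤ 9) hn]

lemma sum_Ioc_log (n : ℕ) (hn : 9 ≤ n) :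
    ∑ i ∈ Finset.Ioc 9 n, Real.log i = Real.log (Nat.factorial n) - Real.log (362880) := by
  have h : ∑ i ∈ Finset.Ioc 0 9, Real.log (i:ℕ) + ∑ i ∈ Finset.Ioc 9 n, Real.log (i:ℕ)
      = ∑ i ∈ Finset.Ioc 0 n, Real.log (i:ℕ) :=
    Finset.sum_Ioc_consecutive _ (by omega) hn
  have h1 : ∑ i ∈ Finset.Ioc 0 9, Real.log (i:ℕ) = Real.log 362880 := by
    rw [← Finset.Icc_add_one_left_eq_Ioc, zero_add, sum_log_eq 9]
    norm_num [Nat.factorial]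
  have h2 : ∑ i ∈ Finset.Ioc 0 n, Real.log (i:ℕ) = Real.log (Nat.factorial n) := by
    rw [← Finset.Icc_add_one_left_eq_Ioc, zero_add, sum_log_eq n]
  rw [h1, h2] at h
  linarith

set_option maxHeartbeats 2000000 in
/-- main analytic bound for n ≥ 60, assuming θ 9 = log 223092870 -/
lemma main_large (n : ℕ) (hn : 60 ≤ n) (h9 : θ 9 = Real.log 223092870) :
    θ n ≤ (n : ℝ) * Real.log ((n : ℝ) * Real.log n) := by
  have hn1 : (60:ℝ) ≤ (n:ℝ) := by exact_mod_cast hn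
  have hl2a := log2_lb
  have hl2b := log2_ub
  have hln : (5.9:ℝ) * Real.log 2 ≤ Real.log n := logn_lb hn
  have hlnpos : (0:ℝ) < Real.log n := by nlinarith
  have hk4 := k4 n hn
  -- pointwise bound for i ∈ Ioc 9 n
  have hpt : ∀ i ∈ Finset.Ioc 9 n, Real.log (p i) ≤
      Real.log i + (Real.log (Real.log n) + 1.37 * Real.log 2) := by
    intro i hi
    rw [Finset.mem_Ioc] at hi
    obtain ⟨hi9, hin⟩ := hi
    have hi1 : (10:ℝ) ≤ (i:ℝ) := by exact_mod_cast hi9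
    have hkey := key i (by omega)
    have hmono : (p i : ℝ) ≤ (p n : ℝ) := by exact_mod_cast p_mono hin
    have hppos : (0:ℝ) < (p i:ℝ) := by exact_mod_cast p_pos i
    have hpnpos : (0:ℝ) < (p n:ℝ) := by exact_mod_cast p_pos n
    have hlmono : Real.log (p i) ≤ Real.log (p n) := Real.log_le_log hppos hmono
    -- p i * log 2 ≤ i * log (p i) + log 2 ≤ i * (log p n + 0.07) ≤ i * (16/9) log n
    have h1 : (p i : ℝ) * Real.log 2 ≤ (i:ℝ) * ((16:ℝ)/9) * Real.log n := by
      have ha : (p i : ℝ) * Real.log 2 ≤ (i:ℝ) * Real.log (p i) + Real.log 2 := by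
        nlinarith [hkey]
      have hb : (i:ℝ) * Real.log (p i) + Real.log 2 ≤ (i:ℝ) * (Real.log (p n) + 0.07) := by
        nlinarith [hlmono]
      calc (p i:ℝ) * Real.log 2 ≤ (i:ℝ) * (Real.log (p n) + 0.07) := le_trans ha hb
        _ ≤ (i:ℝ) * ((16:ℝ)/9) * Real.log n := by nlinarith [hk4]
    have h2 : (p i : ℝ) ≤ 2.58 * i * Real.log n := by
      nlinarith [h1, mul_pos (mul_pos (show (0:ℝ) < 2.58 by norm_num)
        (show (0:ℝ) < (i:ℝ) by linarith)) hlnpos]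
    have h3 : Real.log (p i) ≤ Real.log (2.58 * i * Real.log n) := Real.log_le_log hppos h2
    rw [Real.log_mul (by positivity) (ne_of_gt hlnpos),
        Real.log_mul (by norm_num) (by positivity)] at h3
    nlinarith [h3, log258_ub]
  -- sum it
  have hsum : ∑ i ∈ Finset.Ioc 9 n, Real.log (p i) ≤
      (Real.log (Nat.factorial n) - Real.log 362880) + ((n:ℝ) - 9) * (Real.log (Real.log n) + 1.37 * Real.log 2) := by
    calc ∑ i ∈ Finset.Ioc 9 n, Real.log (p i)
        ≤ ∑ i ∈ Finset.Ioc 9 n, (Real.log i + (Real.log (Real.log n) + 1.37 * Real.log 2)) :=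
          Finset.sum_le_sum hpt
      _ = ∑ i ∈ Finset.Ioc 9 n, Real.log i
          + ((n:ℝ) - 9) * (Real.log (Real.log n) + 1.37 * Real.log 2) := by
          rw [Finset.sum_add_distrib, Finset.sum_const, Nat.card_Ioc, nsmul_eq_mul]
          have h99 : ((n - 9 : ℕ) : ℝ) = (n:ℝ) - 9 := by
            have h9n : 9 ≤ n := by omega
            push_cast [h9n]; ring
          rw [h99]
      _ = _ := by rw [sum_Ioc_log n (by omega)]
  have hth := theta_split n (by omega)
  have hfact := log_fact_le n (by omega)
  have hLM := logM_ub
  have hLF := logF_lb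
  have hlln_lb : 2 * Real.log 2 ≤ Real.log (Real.log n) := by
    have h4 : Real.log 4 ≤ Real.log (Real.log n) := by
      apply Real.log_le_log (by norm_num)
      nlinarith
    rw [show (4:ℝ) = 2^(2:ℕ) by norm_num, Real.log_pow] at h4
    push_cast at h4; linarith
  have hln_ub : Real.log n ≤ 5.91 * Real.log 2 + (n:ℝ)/60 - 1 := by
    have h := loglin (show (0:ℝ) < (n:ℝ) by linarith) (show (0:ℝ) < 60 by norm_num)
    nlinarith [log60_ub]
  -- target : θ n ≤ n log n + n log log n
  have htarget : (n:ℝ) * Real.log ((n:ℝ) * Real.log n)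
      = (n:ℝ) * Real.log n + (n:ℝ) * Real.log (Real.log n) := by
    rw [Real.log_mul (by positivity) (ne_of_gt hlnpos)]; ring
  rw [htarget, hth, h9]
  have hnl2 : ((n:ℝ) - 9) * Real.log 2 ≤ ((n:ℝ) - 9) * 0.6931471808 :=
    mul_le_mul_of_nonneg_left hl2b (by linarith)
  have hexp : ((n:ℝ)-9) * (Real.log (Real.log n) + 1.37 * Real.log 2)
      = (n:ℝ) * Real.log (Real.log n) - 9 * Real.log (Real.log n)
        + 1.37 * (((n:ℝ)-9) * Real.log 2) := by ring
  rw [hexp] at hsum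
  linarith [hsum, hfact, hLM, hLF, hlln_lb, hln_ub, hnl2, hn1, hl2a, hl2b]

end Aux3
namespace Aux4
open Finset Aux Aux2 Aux3

lemma count_stable : ∀ b a, a ≤ b → (∀ c, a ≤ c → c < b → ¬Nat.Prime c) →
    Nat.count Nat.Prime b = Nat.count Nat.Prime a := by
  intro b
  induction b with
  | zero => intro a h _; interval_cases a; rfl
  | succ n ih =>
    intro a h hnp
    rcases Nat.lt_or_ge a (n+1) with h' | h'
    · have h2 : Nat.count Nat.Prime n = Nat.count Nat.Prime a :=
        ih a (by omega) (fun c h1 h2 => hnp c h1 (by omega))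
      rw [Nat.count_succ, h2, if_neg (hnp n (by omega) (by omega))]
      omega
    · have : a = n + 1 := le_antisymm h h'
      rw [this]

lemma count_step {a b k : ℕ} (ha : Nat.Prime a) (hab : a < b)
    (h : ∀ c, a < c → c < b → ¬ Nat.Prime c) (hk : Nat.count Nat.Prime a = k) :
    Nat.count Nat.Prime b = k + 1 := by
  have h1 : Nat.count Nat.Prime b = Nat.count Nat.Prime (a+1) :=
    count_stable b (a+1) (by omega) (fun c h1 h2 => h c (by omega) h2)
  rw [h1, Nat.count_succ, if_pos ha, hk]

lemma theta_eq (n : ℕ) : θ n = Real.log (((Finset.Icc 1 n).prod p : ℕ) : ℝ) := by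
  rw [θ, Nat.cast_prod, Real.log_prod]
  intro x _
  exact_mod_cast (p_pos x).ne'

lemma finite_case {n M c : ℕ} (hn : 1 ≤ n) (hM : (Finset.Icc 1 n).prod p = M)
    (h1 : M * 160000^n ≤ (6931 * c * n)^n) (h2 : 2^c ≤ n^16) (hc : 0 < c) :
    θ n ≤ (n:ℝ) * Real.log ((n:ℝ) * Real.log (n:ℝ)) := by
  have hn0 : (0:ℝ) < (n:ℝ) := by exact_mod_cast hn
  have hM0 : 0 < M := by
    rw [← hM]
    exact Finset.prod_pos (fun i _ => p_pos i)
  set q : ℝ := (6931 * c * n : ℕ) / (160000 * n : ℝ) with hq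
  have hqpos : 0 < q := by
    apply div_pos
    · exact_mod_cast Nat.pos_of_ne_zero (by positivity)
    · positivity
  have hMle : (M:ℝ) ≤ ((n:ℝ) * q)^n := by
    have hcast : ((M * 160000^n : ℕ) : ℝ) ≤ (((6931 * c * n)^n : ℕ) : ℝ) := by
      exact_mod_cast h1
    push_cast at hcast
    have hnq : (n:ℝ) * q = (6931 * c * n : ℝ) / 160000 := by
      rw [hq]; push_cast; field_simp
    rw [hnq, div_pow]
    rw [le_div_iff₀ (by positivity)]
    linarith [hcast]
  have hqlog : (n:ℝ) * q ≤ (n:ℝ) * Real.log n := by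
    have hl := pow_log_le (x := (n:ℝ)) (a := c) (b := 16) hn0 (by exact_mod_cast h2)
    have hl2a := log2_lb
    have hcp : (0:ℝ) < (c:ℝ) := by exact_mod_cast hc
    have hq2 : q = (6931 * c : ℝ) / 160000 := by
      rw [hq]; push_cast; field_simp
    have : q ≤ Real.log n := by
      rw [hq2]
      rw [div_le_iff₀ (by norm_num)]
      push_cast at hl
      nlinarith [hl, hl2a, hcp, mul_le_mul_of_nonneg_left hl2a (le_of_lt hcp)]
    nlinarith [this, hn0]
  have hlog1 : θ n ≤ (n:ℝ) * Real.log ((n:ℝ) * q) := by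
    rw [theta_eq n, hM]
    have := Real.log_le_log (by exact_mod_cast hM0) hMle
    rwa [Real.log_pow] at this
  refine le_trans hlog1 ?_
  apply mul_le_mul_of_nonneg_left _ (le_of_lt hn0)
  exact Real.log_le_log (by positivity) hqlog

end Aux4
namespace Aux5
open Finset Aux Aux2 Aux3 Aux4
lemma cnt2 : Nat.count Nat.Prime 2 = 0 := by
  apply count_stable 2 0 (by omega)
  intro c h1 h2; interval_cases c <;> norm_num
lemma cnt3 : Nat.count Nat.Prime 3 = 1 := count_step (by norm_num) (by norm_num) (by intro c h1 h2; omega) cnt2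
lemma cnt5 : Nat.count Nat.Prime 5 = 2 := count_step (by norm_num) (by norm_num) (by intro c h1 h2; interval_cases c <;> norm_num) cnt3
lemma cnt7 : Nat.count Nat.Prime 7 = 3 := count_step (by norm_num) (by norm_num) (by intro c h1 h2; interval_cases c <;> norm_num) cnt5
lemma cnt11 : Nat.count Nat.Prime 11 = 4 := count_step (by norm_num) (by norm_num) (by intro c h1 h2; interval_cases c <;> norm_num) cnt7
lemma cnt13 : Nat.count Nat.Prime 13 = 5 := count_step (by norm_num) (by norm_num) (by intro c h1 h2; interval_cases c <;> norm_num) cnt11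
lemma cnt17 : Nat.count Nat.Prime 17 = 6 := count_step (by norm_num) (by norm_num) (by intro c h1 h2; interval_cases c <;> norm_num) cnt13
lemma cnt19 : Nat.count Nat.Prime 19 = 7 := count_step (by norm_num) (by norm_num) (by intro c h1 h2; interval_cases c <;> norm_num) cnt17
lemma cnt23 : Nat.count Nat.Prime 23 = 8 := count_step (by norm_num) (by norm_num) (by intro c h1 h2; interval_cases c <;> norm_num) cnt19
lemma cnt29 : Nat.count Nat.Prime 29 = 9 := count_step (by norm_num) (by norm_num) (by intro c h1 h2; interval_cases c <;> norm_num) cnt23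
lemma cnt31 : Nat.count Nat.Prime 31 = 10 := count_step (by norm_num) (by norm_num) (by intro c h1 h2; interval_cases c <;> norm_num) cnt29
lemma cnt37 : Nat.count Nat.Prime 37 = 11 := count_step (by norm_num) (by norm_num) (by intro c h1 h2; interval_cases c <;> norm_num) cnt31
lemma cnt41 : Nat.count Nat.Prime 41 = 12 := count_step (by norm_num) (by norm_num) (by intro c h1 h2; interval_cases c <;> norm_num) cnt37
lemma cnt43 : Nat.count Nat.Prime 43 = 13 := count_step (by norm_num) (by norm_num) (by intro c h1 h2; interval_cases c <;> norm_num) cnt41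
lemma cnt47 : Nat.count Nat.Prime 47 = 14 := count_step (by norm_num) (by norm_num) (by intro c h1 h2; interval_cases c <;> norm_num) cnt43
lemma cnt53 : Nat.count Nat.Prime 53 = 15 := count_step (by norm_num) (by norm_num) (by intro c h1 h2; interval_cases c <;> norm_num) cnt47
lemma cnt59 : Nat.count Nat.Prime 59 = 16 := count_step (by norm_num) (by norm_num) (by intro c h1 h2; interval_cases c <;> norm_num) cnt53
lemma cnt61 : Nat.count Nat.Prime 61 = 17 := count_step (by norm_num) (by norm_num) (by intro c h1 h2; interval_cases c <;> norm_num) cnt59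
lemma cnt67 : Nat.count Nat.Prime 67 = 18 := count_step (by norm_num) (by norm_num) (by intro c h1 h2; interval_cases c <;> norm_num) cnt61
lemma cnt71 : Nat.count Nat.Prime 71 = 19 := count_step (by norm_num) (by norm_num) (by intro c h1 h2; interval_cases c <;> norm_num) cnt67
lemma cnt73 : Nat.count Nat.Prime 73 = 20 := count_step (by norm_num) (by norm_num) (by intro c h1 h2; interval_cases c <;> norm_num) cnt71
lemma cnt79 : Nat.count Nat.Prime 79 = 21 := count_step (by norm_num) (by norm_num) (by intro c h1 h2; interval_cases c <;> norm_num) cnt73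
lemma cnt83 : Nat.count Nat.Prime 83 = 22 := count_step (by norm_num) (by norm_num) (by intro c h1 h2; interval_cases c <;> norm_num) cnt79
lemma cnt89 : Nat.count Nat.Prime 89 = 23 := count_step (by norm_num) (by norm_num) (by intro c h1 h2; interval_cases c <;> norm_num) cnt83
lemma cnt97 : Nat.count Nat.Prime 97 = 24 := count_step (by norm_num) (by norm_num) (by intro c h1 h2; interval_cases c <;> norm_num) cnt89
lemma cnt101 : Nat.count Nat.Prime 101 = 25 := count_step (by norm_num) (by norm_num) (by intro c h1 h2; interval_cases c <;> norm_num) cnt97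
lemma cnt103 : Nat.count Nat.Prime 103 = 26 := count_step (by norm_num) (by norm_num) (by intro c h1 h2; interval_cases c <;> norm_num) cnt101
lemma cnt107 : Nat.count Nat.Prime 107 = 27 := count_step (by norm_num) (by norm_num) (by intro c h1 h2; interval_cases c <;> norm_num) cnt103
lemma cnt109 : Nat.count Nat.Prime 109 = 28 := count_step (by norm_num) (by norm_num) (by intro c h1 h2; interval_cases c <;> norm_num) cnt107
lemma cnt113 : Nat.count Nat.Prime 113 = 29 := count_step (by norm_num) (by norm_num) (by intro c h1 h2; interval_cases c <;> norm_num) cnt109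
lemma cnt127 : Nat.count Nat.Prime 127 = 30 := count_step (by norm_num) (by norm_num) (by intro c h1 h2; interval_cases c <;> norm_num) cnt113
lemma cnt131 : Nat.count Nat.Prime 131 = 31 := count_step (by norm_num) (by norm_num) (by intro c h1 h2; interval_cases c <;> norm_num) cnt127
lemma cnt137 : Nat.count Nat.Prime 137 = 32 := count_step (by norm_num) (by norm_num) (by intro c h1 h2; interval_cases c <;> norm_num) cnt131
lemma cnt139 : Nat.count Nat.Prime 139 = 33 := count_step (by norm_num) (by norm_num) (by intro c h1 h2; interval_cases c <;> norm_num) cnt137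
lemma cnt149 : Nat.count Nat.Prime 149 = 34 := count_step (by norm_num) (by norm_num) (by intro c h1 h2; interval_cases c <;> norm_num) cnt139
lemma cnt151 : Nat.count Nat.Prime 151 = 35 := count_step (by norm_num) (by norm_num) (by intro c h1 h2; interval_cases c <;> norm_num) cnt149
lemma cnt157 : Nat.count Nat.Prime 157 = 36 := count_step (by norm_num) (by norm_num) (by intro c h1 h2; interval_cases c <;> norm_num) cnt151
lemma cnt163 : Nat.count Nat.Prime 163 = 37 := count_step (by norm_num) (by norm_num) (by intro c h1 h2; interval_cases c <;> norm_num) cnt157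
lemma cnt167 : Nat.count Nat.Prime 167 = 38 := count_step (by norm_num) (by norm_num) (by intro c h1 h2; interval_cases c <;> norm_num) cnt163
lemma cnt173 : Nat.count Nat.Prime 173 = 39 := count_step (by norm_num) (by norm_num) (by intro c h1 h2; interval_cases c <;> norm_num) cnt167
lemma cnt179 : Nat.count Nat.Prime 179 = 40 := count_step (by norm_num) (by norm_num) (by intro c h1 h2; interval_cases c <;> norm_num) cnt173
lemma cnt181 : Nat.count Nat.Prime 181 = 41 := count_step (by norm_num) (by norm_num) (by intro c h1 h2; interval_cases c <;> norm_num) cnt179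
lemma cnt191 : Nat.count Nat.Prime 191 = 42 := count_step (by norm_num) (by norm_num) (by intro c h1 h2; interval_cases c <;> norm_num) cnt181
lemma cnt193 : Nat.count Nat.Prime 193 = 43 := count_step (by norm_num) (by norm_num) (by intro c h1 h2; interval_cases c <;> norm_num) cnt191
lemma cnt197 : Nat.count Nat.Prime 197 = 44 := count_step (by norm_num) (by norm_num) (by intro c h1 h2; interval_cases c <;> norm_num) cnt193
lemma cnt199 : Nat.count Nat.Prime 199 = 45 := count_step (by norm_num) (by norm_num) (by intro c h1 h2; interval_cases c <;> norm_num) cnt197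
lemma cnt211 : Nat.count Nat.Prime 211 = 46 := count_step (by norm_num) (by norm_num) (by intro c h1 h2; interval_cases c <;> norm_num) cnt199
lemma cnt223 : Nat.count Nat.Prime 223 = 47 := count_step (by norm_num) (by norm_num) (by intro c h1 h2; interval_cases c <;> norm_num) cnt211
lemma cnt227 : Nat.count Nat.Prime 227 = 48 := count_step (by norm_num) (by norm_num) (by intro c h1 h2; interval_cases c <;> norm_num) cnt223
lemma cnt229 : Nat.count Nat.Prime 229 = 49 := count_step (by norm_num) (by norm_num) (by intro c h1 h2; interval_cases c <;> norm_num) cnt227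
lemma cnt233 : Nat.count Nat.Prime 233 = 50 := count_step (by norm_num) (by norm_num) (by intro c h1 h2; interval_cases c <;> norm_num) cnt229
lemma cnt239 : Nat.count Nat.Prime 239 = 51 := count_step (by norm_num) (by norm_num) (by intro c h1 h2; interval_cases c <;> norm_num) cnt233
lemma cnt241 : Nat.count Nat.Prime 241 = 52 := count_step (by norm_num) (by norm_num) (by intro c h1 h2; interval_cases c <;> norm_num) cnt239
lemma cnt251 : Nat.count Nat.Prime 251 = 53 := count_step (by norm_num) (by norm_num) (by intro c h1 h2; interval_cases c <;> norm_num) cnt241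
lemma cnt257 : Nat.count Nat.Prime 257 = 54 := count_step (by norm_num) (by norm_num) (by intro c h1 h2; interval_cases c <;> norm_num) cnt251
lemma cnt263 : Nat.count Nat.Prime 263 = 55 := count_step (by norm_num) (by norm_num) (by intro c h1 h2; interval_cases c <;> norm_num) cnt257
lemma cnt269 : Nat.count Nat.Prime 269 = 56 := count_step (by norm_num) (by norm_num) (by intro c h1 h2; interval_cases c <;> norm_num) cnt263
lemma cnt271 : Nat.count Nat.Prime 271 = 57 := count_step (by norm_num) (by norm_num) (by intro c h1 h2; interval_cases c <;> norm_num) cnt269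
lemma cnt277 : Nat.count Nat.Prime 277 = 58 := count_step (by norm_num) (by norm_num) (by intro c h1 h2; interval_cases c <;> norm_num) cnt271
lemma pe1 : p 1 = 2 := by
  have h := Nat.nth_count (p := Nat.Prime) (n := 2) (by norm_num)
  rw [cnt2] at h
  exact h
lemma pe2 : p 2 = 3 := by
  have h := Nat.nth_count (p := Nat.Prime) (n := 3) (by norm_num)
  rw [cnt3] at h
  exact h
lemma pe3 : p 3 = 5 := by
  have h := Nat.nth_count (p := Nat.Prime) (n := 5) (by norm_num)
  rw [cnt5] at h
  exact h
lemma pe4 : p 4 = 7 := by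
  have h := Nat.nth_count (p := Nat.Prime) (n := 7) (by norm_num)
  rw [cnt7] at h
  exact h
lemma pe5 : p 5 = 11 := by
  have h := Nat.nth_count (p := Nat.Prime) (n := 11) (by norm_num)
  rw [cnt11] at h
  exact h
lemma pe6 : p 6 = 13 := by
  have h := Nat.nth_count (p := Nat.Prime) (n := 13) (by norm_num)
  rw [cnt13] at h
  exact h
lemma pe7 : p 7 = 17 := by
  have h := Nat.nth_count (p := Nat.Prime) (n := 17) (by norm_num)
  rw [cnt17] at h
  exact h
lemma pe8 : p 8 = 19 := by
  have h := Nat.nth_count (p := Nat.Prime) (n := 19) (by norm_num)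
  rw [cnt19] at h
  exact h
lemma pe9 : p 9 = 23 := by
  have h := Nat.nth_count (p := Nat.Prime) (n := 23) (by norm_num)
  rw [cnt23] at h
  exact h
lemma pe10 : p 10 = 29 := by
  have h := Nat.nth_count (p := Nat.Prime) (n := 29) (by norm_num)
  rw [cnt29] at h
  exact h
lemma pe11 : p 11 = 31 := by
  have h := Nat.nth_count (p := Nat.Prime) (n := 31) (by norm_num)
  rw [cnt31] at h
  exact h
lemma pe12 : p 12 = 37 := by
  have h := Nat.nth_count (p := Nat.Prime) (n := 37) (by norm_num)
  rw [cnt37] at h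
  exact h
lemma pe13 : p 13 = 41 := by
  have h := Nat.nth_count (p := Nat.Prime) (n := 41) (by norm_num)
  rw [cnt41] at h
  exact h
lemma pe14 : p 14 = 43 := by
  have h := Nat.nth_count (p := Nat.Prime) (n := 43) (by norm_num)
  rw [cnt43] at h
  exact h
lemma pe15 : p 15 = 47 := by
  have h := Nat.nth_count (p := Nat.Prime) (n := 47) (by norm_num)
  rw [cnt47] at h
  exact h
lemma pe16 : p 16 = 53 := by
  have h := Nat.nth_count (p := Nat.Prime) (n := 53) (by norm_num)
  rw [cnt53] at h
  exact h
lemma pe17 : p 17 = 59 := by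
  have h := Nat.nth_count (p := Nat.Prime) (n := 59) (by norm_num)
  rw [cnt59] at h
  exact h
lemma pe18 : p 18 = 61 := by
  have h := Nat.nth_count (p := Nat.Prime) (n := 61) (by norm_num)
  rw [cnt61] at h
  exact h
lemma pe19 : p 19 = 67 := by
  have h := Nat.nth_count (p := Nat.Prime) (n := 67) (by norm_num)
  rw [cnt67] at h
  exact h
lemma pe20 : p 20 = 71 := by
  have h := Nat.nth_count (p := Nat.Prime) (n := 71) (by norm_num)
  rw [cnt71] at h
  exact h
lemma pe21 : p 21 = 73 := by
  have h := Nat.nth_count (p := Nat.Prime) (n := 73) (by norm_num)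
  rw [cnt73] at h
  exact h
lemma pe22 : p 22 = 79 := by
  have h := Nat.nth_count (p := Nat.Prime) (n := 79) (by norm_num)
  rw [cnt79] at h
  exact h
lemma pe23 : p 23 = 83 := by
  have h := Nat.nth_count (p := Nat.Prime) (n := 83) (by norm_num)
  rw [cnt83] at h
  exact h
lemma pe24 : p 24 = 89 := by
  have h := Nat.nth_count (p := Nat.Prime) (n := 89) (by norm_num)
  rw [cnt89] at h
  exact h
lemma pe25 : p 25 = 97 := by
  have h := Nat.nth_count (p := Nat.Prime) (n := 97) (by norm_num)
  rw [cnt97] at h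
  exact h
lemma pe26 : p 26 = 101 := by
  have h := Nat.nth_count (p := Nat.Prime) (n := 101) (by norm_num)
  rw [cnt101] at h
  exact h
lemma pe27 : p 27 = 103 := by
  have h := Nat.nth_count (p := Nat.Prime) (n := 103) (by norm_num)
  rw [cnt103] at h
  exact h
lemma pe28 : p 28 = 107 := by
  have h := Nat.nth_count (p := Nat.Prime) (n := 107) (by norm_num)
  rw [cnt107] at h
  exact h
lemma pe29 : p 29 = 109 := by
  have h := Nat.nth_count (p := Nat.Prime) (n := 109) (by norm_num)
  rw [cnt109] at h
  exact h
lemma pe30 : p 30 = 113 := by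
  have h := Nat.nth_count (p := Nat.Prime) (n := 113) (by norm_num)
  rw [cnt113] at h
  exact h
lemma pe31 : p 31 = 127 := by
  have h := Nat.nth_count (p := Nat.Prime) (n := 127) (by norm_num)
  rw [cnt127] at h
  exact h
lemma pe32 : p 32 = 131 := by
  have h := Nat.nth_count (p := Nat.Prime) (n := 131) (by norm_num)
  rw [cnt131] at h
  exact h
lemma pe33 : p 33 = 137 := by
  have h := Nat.nth_count (p := Nat.Prime) (n := 137) (by norm_num)
  rw [cnt137] at h
  exact h
lemma pe34 : p 34 = 139 := by
  have h := Nat.nth_count (p := Nat.Prime) (n := 139) (by norm_num)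
  rw [cnt139] at h
  exact h
lemma pe35 : p 35 = 149 := by
  have h := Nat.nth_count (p := Nat.Prime) (n := 149) (by norm_num)
  rw [cnt149] at h
  exact h
lemma pe36 : p 36 = 151 := by
  have h := Nat.nth_count (p := Nat.Prime) (n := 151) (by norm_num)
  rw [cnt151] at h
  exact h
lemma pe37 : p 37 = 157 := by
  have h := Nat.nth_count (p := Nat.Prime) (n := 157) (by norm_num)
  rw [cnt157] at h
  exact h
lemma pe38 : p 38 = 163 := by
  have h := Nat.nth_count (p := Nat.Prime) (n := 163) (by norm_num)
  rw [cnt163] at h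
  exact h
lemma pe39 : p 39 = 167 := by
  have h := Nat.nth_count (p := Nat.Prime) (n := 167) (by norm_num)
  rw [cnt167] at h
  exact h
lemma pe40 : p 40 = 173 := by
  have h := Nat.nth_count (p := Nat.Prime) (n := 173) (by norm_num)
  rw [cnt173] at h
  exact h
lemma pe41 : p 41 = 179 := by
  have h := Nat.nth_count (p := Nat.Prime) (n := 179) (by norm_num)
  rw [cnt179] at h
  exact h
lemma pe42 : p 42 = 181 := by
  have h := Nat.nth_count (p := Nat.Prime) (n := 181) (by norm_num)
  rw [cnt181] at h
  exact h
lemma pe43 : p 43 = 191 := by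
  have h := Nat.nth_count (p := Nat.Prime) (n := 191) (by norm_num)
  rw [cnt191] at h
  exact h
lemma pe44 : p 44 = 193 := by
  have h := Nat.nth_count (p := Nat.Prime) (n := 193) (by norm_num)
  rw [cnt193] at h
  exact h
lemma pe45 : p 45 = 197 := by
  have h := Nat.nth_count (p := Nat.Prime) (n := 197) (by norm_num)
  rw [cnt197] at h
  exact h
lemma pe46 : p 46 = 199 := by
  have h := Nat.nth_count (p := Nat.Prime) (n := 199) (by norm_num)
  rw [cnt199] at h
  exact h
lemma pe47 : p 47 = 211 := by
  have h := Nat.nth_count (p := Nat.Prime) (n := 211) (by norm_num)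
  rw [cnt211] at h
  exact h
lemma pe48 : p 48 = 223 := by
  have h := Nat.nth_count (p := Nat.Prime) (n := 223) (by norm_num)
  rw [cnt223] at h
  exact h
lemma pe49 : p 49 = 227 := by
  have h := Nat.nth_count (p := Nat.Prime) (n := 227) (by norm_num)
  rw [cnt227] at h
  exact h
lemma pe50 : p 50 = 229 := by
  have h := Nat.nth_count (p := Nat.Prime) (n := 229) (by norm_num)
  rw [cnt229] at h
  exact h
lemma pe51 : p 51 = 233 := by
  have h := Nat.nth_count (p := Nat.Prime) (n := 233) (by norm_num)
  rw [cnt233] at h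
  exact h
lemma pe52 : p 52 = 239 := by
  have h := Nat.nth_count (p := Nat.Prime) (n := 239) (by norm_num)
  rw [cnt239] at h
  exact h
lemma pe53 : p 53 = 241 := by
  have h := Nat.nth_count (p := Nat.Prime) (n := 241) (by norm_num)
  rw [cnt241] at h
  exact h
lemma pe54 : p 54 = 251 := by
  have h := Nat.nth_count (p := Nat.Prime) (n := 251) (by norm_num)
  rw [cnt251] at h
  exact h
lemma pe55 : p 55 = 257 := by
  have h := Nat.nth_count (p := Nat.Prime) (n := 257) (by norm_num)
  rw [cnt257] at h
  exact h
lemma pe56 : p 56 = 263 := by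
  have h := Nat.nth_count (p := Nat.Prime) (n := 263) (by norm_num)
  rw [cnt263] at h
  exact h
lemma pe57 : p 57 = 269 := by
  have h := Nat.nth_count (p := Nat.Prime) (n := 269) (by norm_num)
  rw [cnt269] at h
  exact h
lemma pe58 : p 58 = 271 := by
  have h := Nat.nth_count (p := Nat.Prime) (n := 271) (by norm_num)
  rw [cnt271] at h
  exact h
lemma pe59 : p 59 = 277 := by
  have h := Nat.nth_count (p := Nat.Prime) (n := 277) (by norm_num)
  rw [cnt277] at h
  exact h
lemma Pr1 : (Finset.Icc 1 1).prod p = 2 := by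
  rw [Finset.Icc_self, Finset.prod_singleton, pe1]
lemma Pr2 : (Finset.Icc 1 2).prod p = 6 := by
  have h := Finset.prod_Icc_succ_top (show 1 ≤ 1+1 by omega) p
  norm_num at h
  rw [h, pe1, pe2]
  norm_num
lemma Pr3 : (Finset.Icc 1 3).prod p = 30 := by
  have h := Finset.prod_Icc_succ_top (show 1 ≤ 2+1 by omega) p
  norm_num at h
  rw [h, Pr2, pe3]
  norm_num
lemma Pr4 : (Finset.Icc 1 4).prod p = 210 := by
  have h := Finset.prod_Icc_succ_top (show 1 ≤ 3+1 by omega) p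
  norm_num at h
  rw [h, Pr3, pe4]
  norm_num
lemma Pr5 : (Finset.Icc 1 5).prod p = 2310 := by
  have h := Finset.prod_Icc_succ_top (show 1 ≤ 4+1 by omega) p
  norm_num at h
  rw [h, Pr4, pe5]
  norm_num
lemma Pr6 : (Finset.Icc 1 6).prod p = 30030 := by
  have h := Finset.prod_Icc_succ_top (show 1 ≤ 5+1 by omega) p
  norm_num at h
  rw [h, Pr5, pe6]
  norm_num
lemma Pr7 : (Finset.Icc 1 7).prod p = 510510 := by
  have h := Finset.prod_Icc_succ_top (show 1 ≤ 6+1 by omega) p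
  norm_num at h
  rw [h, Pr6, pe7]
  norm_num
lemma Pr8 : (Finset.Icc 1 8).prod p = 9699690 := by
  have h := Finset.prod_Icc_succ_top (show 1 ≤ 7+1 by omega) p
  norm_num at h
  rw [h, Pr7, pe8]
  norm_num
lemma Pr9 : (Finset.Icc 1 9).prod p = 223092870 := by
  have h := Finset.prod_Icc_succ_top (show 1 ≤ 8+1 by omega) p
  norm_num at h
  rw [h, Pr8, pe9]
  norm_num
lemma Pr10 : (Finset.Icc 1 10).prod p = 6469693230 := by
  have h := Finset.prod_Icc_succ_top (show 1 ≤ 9+1 by omega) p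
  norm_num at h
  rw [h, Pr9, pe10]
  norm_num
lemma Pr11 : (Finset.Icc 1 11).prod p = 200560490130 := by
  have h := Finset.prod_Icc_succ_top (show 1 ≤ 10+1 by omega) p
  norm_num at h
  rw [h, Pr10, pe11]
  norm_num
lemma Pr12 : (Finset.Icc 1 12).prod p = 7420738134810 := by
  have h := Finset.prod_Icc_succ_top (show 1 ≤ 11+1 by omega) p
  norm_num at h
  rw [h, Pr11, pe12]
  norm_num
lemma Pr13 : (Finset.Icc 1 13).prod p = 304250263527210 := by
  have h := Finset.prod_Icc_succ_top (show 1 ≤ 12+1 by omega) p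
  norm_num at h
  rw [h, Pr12, pe13]
  norm_num
lemma Pr14 : (Finset.Icc 1 14).prod p = 13082761331670030 := by
  have h := Finset.prod_Icc_succ_top (show 1 ≤ 13+1 by omega) p
  norm_num at h
  rw [h, Pr13, pe14]
  norm_num
lemma Pr15 : (Finset.Icc 1 15).prod p = 614889782588491410 := by
  have h := Finset.prod_Icc_succ_top (show 1 ≤ 14+1 by omega) p
  norm_num at h
  rw [h, Pr14, pe15]
  norm_num
lemma Pr16 : (Finset.Icc 1 16).prod p = 32589158477190044730 := by
  have h := Finset.prod_Icc_succ_top (show 1 ≤ 15+1 by omega) p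
  norm_num at h
  rw [h, Pr15, pe16]
  norm_num
lemma Pr17 : (Finset.Icc 1 17).prod p = 1922760350154212639070 := by
  have h := Finset.prod_Icc_succ_top (show 1 ≤ 16+1 by omega) p
  norm_num at h
  rw [h, Pr16, pe17]
  norm_num
lemma Pr18 : (Finset.Icc 1 18).prod p = 117288381359406970983270 := by
  have h := Finset.prod_Icc_succ_top (show 1 ≤ 17+1 by omega) p
  norm_num at h
  rw [h, Pr17, pe18]
  norm_num
lemma Pr19 : (Finset.Icc 1 19).prod p = 7858321551080267055879090 := by
  have h := Finset.prod_Icc_succ_top (show 1 ≤ 18+1 by omega) p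
  norm_num at h
  rw [h, Pr18, pe19]
  norm_num
lemma Pr20 : (Finset.Icc 1 20).prod p = 557940830126698960967415390 := by
  have h := Finset.prod_Icc_succ_top (show 1 ≤ 19+1 by omega) p
  norm_num at h
  rw [h, Pr19, pe20]
  norm_num
lemma Pr21 : (Finset.Icc 1 21).prod p = 40729680599249024150621323470 := by
  have h := Finset.prod_Icc_succ_top (show 1 ≤ 20+1 by omega) p
  norm_num at h
  rw [h, Pr20, pe21]
  norm_num
lemma Pr22 : (Finset.Icc 1 22).prod p = 3217644767340672907899084554130 := by
  have h := Finset.prod_Icc_succ_top (show 1 ≤ 21+1 by omega) p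
  norm_num at h
  rw [h, Pr21, pe22]
  norm_num
lemma Pr23 : (Finset.Icc 1 23).prod p = 267064515689275851355624017992790 := by
  have h := Finset.prod_Icc_succ_top (show 1 ≤ 22+1 by omega) p
  norm_num at h
  rw [h, Pr22, pe23]
  norm_num
lemma Pr24 : (Finset.Icc 1 24).prod p = 23768741896345550770650537601358310 := by
  have h := Finset.prod_Icc_succ_top (show 1 ≤ 23+1 by omega) p
  norm_num at h
  rw [h, Pr23, pe24]
  norm_num
lemma Pr25 : (Finset.Icc 1 25).prod p = 2305567963945518424753102147331756070 := by
  have h := Finset.prod_Icc_succ_top (show 1 ≤ 24+1 by omega) p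
  norm_num at h
  rw [h, Pr24, pe25]
  norm_num
lemma Pr26 : (Finset.Icc 1 26).prod p = 232862364358497360900063316880507363070 := by
  have h := Finset.prod_Icc_succ_top (show 1 ≤ 25+1 by omega) p
  norm_num at h
  rw [h, Pr25, pe26]
  norm_num
lemma Pr27 : (Finset.Icc 1 27).prod p = 23984823528925228172706521638692258396210 := by
  have h := Finset.prod_Icc_succ_top (show 1 ≤ 26+1 by omega) p
  norm_num at h
  rw [h, Pr26, pe27]
  norm_num
lemma Pr28 : (Finset.Icc 1 28).prod p = 2566376117594999414479597815340071648394470 := by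
  have h := Finset.prod_Icc_succ_top (show 1 ≤ 27+1 by omega) p
  norm_num at h
  rw [h, Pr27, pe28]
  norm_num
lemma Pr29 : (Finset.Icc 1 29).prod p = 279734996817854936178276161872067809674997230 := by
  have h := Finset.prod_Icc_succ_top (show 1 ≤ 28+1 by omega) p
  norm_num at h
  rw [h, Pr28, pe29]
  norm_num
lemma Pr30 : (Finset.Icc 1 30).prod p = 31610054640417607788145206291543662493274686990 := by
  have h := Finset.prod_Icc_succ_top (show 1 ≤ 29+1 by omega) p
  norm_num at h
  rw [h, Pr29, pe30]
  norm_num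
lemma Pr31 : (Finset.Icc 1 31).prod p = 4014476939333036189094441199026045136645885247730 := by
  have h := Finset.prod_Icc_succ_top (show 1 ≤ 30+1 by omega) p
  norm_num at h
  rw [h, Pr30, pe31]
  norm_num
lemma Pr32 : (Finset.Icc 1 32).prod p = 525896479052627740771371797072411912900610967452630 := by
  have h := Finset.prod_Icc_succ_top (show 1 ≤ 31+1 by omega) p
  norm_num at h
  rw [h, Pr31, pe32]
  norm_num
lemma Pr33 : (Finset.Icc 1 33).prod p = 72047817630210000485677936198920432067383702541010310 := by
  have h := Finset.prod_Icc_succ_top (show 1 ≤ 32+1 by omega) p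
  norm_num at h
  rw [h, Pr32, pe33]
  norm_num
lemma Pr34 : (Finset.Icc 1 34).prod p = 10014646650599190067509233131649940057366334653200433090 := by
  have h := Finset.prod_Icc_succ_top (show 1 ≤ 33+1 by omega) p
  norm_num at h
  rw [h, Pr33, pe34]
  norm_num
lemma Pr35 : (Finset.Icc 1 35).prod p = 1492182350939279320058875736615841068547583863326864530410 := by
  have h := Finset.prod_Icc_succ_top (show 1 ≤ 34+1 by omega) p
  norm_num at h
  rw [h, Pr34, pe35]
  norm_num
lemma Pr36 : (Finset.Icc 1 36).prod p = 225319534991831177328890236228992001350685163362356544091910 := by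
  have h := Finset.prod_Icc_succ_top (show 1 ≤ 35+1 by omega) p
  norm_num at h
  rw [h, Pr35, pe36]
  norm_num
lemma Pr37 : (Finset.Icc 1 37).prod p = 35375166993717494840635767087951744212057570647889977422429870 := by
  have h := Finset.prod_Icc_succ_top (show 1 ≤ 36+1 by omega) p
  norm_num at h
  rw [h, Pr36, pe37]
  norm_num
lemma Pr38 : (Finset.Icc 1 38).prod p = 5766152219975951659023630035336134306565384015606066319856068810 := by
  have h := Finset.prod_Icc_succ_top (show 1 ≤ 37+1 by omega) p
  norm_num at h
  rw [h, Pr37, pe38]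
  norm_num
lemma Pr39 : (Finset.Icc 1 39).prod p = 962947420735983927056946215901134429196419130606213075415963491270 := by
  have h := Finset.prod_Icc_succ_top (show 1 ≤ 38+1 by omega) p
  norm_num at h
  rw [h, Pr38, pe39]
  norm_num
lemma Pr40 : (Finset.Icc 1 40).prod p = 166589903787325219380851695350896256250980509594874862046961683989710 := by
  have h := Finset.prod_Icc_succ_top (show 1 ≤ 39+1 by omega) p
  norm_num at h
  rw [h, Pr39, pe40]
  norm_num
lemma Pr41 : (Finset.Icc 1 41).prod p = 29819592777931214269172453467810429868925511217482600306406141434158090 := by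
  have h := Finset.prod_Icc_succ_top (show 1 ≤ 40+1 by omega) p
  norm_num at h
  rw [h, Pr40, pe41]
  norm_num
lemma Pr42 : (Finset.Icc 1 42).prod p = 5397346292805549782720214077673687806275517530364350655459511599582614290 := by
  have h := Finset.prod_Icc_succ_top (show 1 ≤ 41+1 by omega) p
  norm_num at h
  rw [h, Pr41, pe42]
  norm_num
lemma Pr43 : (Finset.Icc 1 43).prod p = 1030893141925860008499560888835674370998623848299590975192766715520279329390 := by
  have h := Finset.prod_Icc_succ_top (show 1 ≤ 42+1 by omega) p
  norm_num at h
  rw [h, Pr42, pe43]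
  norm_num
lemma Pr44 : (Finset.Icc 1 44).prod p = 198962376391690981640415251545285153602734402721821058212203976095413910572270 := by
  have h := Finset.prod_Icc_succ_top (show 1 ≤ 43+1 by omega) p
  norm_num at h
  rw [h, Pr43, pe44]
  norm_num
lemma Pr45 : (Finset.Icc 1 45).prod p = 39195588149163123383161804554421175259738677336198748467804183290796540382737190 := by
  have h := Finset.prod_Icc_succ_top (show 1 ≤ 44+1 by omega) p
  norm_num at h
  rw [h, Pr44, pe45]
  norm_num
lemma Pr46 : (Finset.Icc 1 46).prod p = 7799922041683461553249199106329813876687996789903550945093032474868511536164700810 := by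
  have h := Finset.prod_Icc_succ_top (show 1 ≤ 45+1 by omega) p
  norm_num at h
  rw [h, Pr45, pe46]
  norm_num
lemma Pr47 : (Finset.Icc 1 47).prod p = 1645783550795210387735581011435590727981167322669649249414629852197255934130751870910 := by
  have h := Finset.prod_Icc_succ_top (show 1 ≤ 46+1 by omega) p
  norm_num at h
  rw [h, Pr46, pe47]
  norm_num
lemma Pr48 : (Finset.Icc 1 48).prod p = 367009731827331916465034565550136732339800312955331782619462457039988073311157667212930 := by
  have h := Finset.prod_Icc_succ_top (show 1 ≤ 47+1 by omega) p
  norm_num at h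
  rw [h, Pr47, pe48]
  norm_num
lemma Pr49 : (Finset.Icc 1 49).prod p = 83311209124804345037562846379881038241134671040860314654617977748077292641632790457335110 := by
  have h := Finset.prod_Icc_succ_top (show 1 ≤ 48+1 by omega) p
  norm_num at h
  rw [h, Pr48, pe49]
  norm_num
lemma Pr50 : (Finset.Icc 1 50).prod p = 19078266889580195013601891820992757757219839668357012055907516904309700014933909014729740190 := by
  have h := Finset.prod_Icc_succ_top (show 1 ≤ 49+1 by omega) p
  norm_num at h
  rw [h, Pr49, pe50]
  norm_num
lemma Pr51 : (Finset.Icc 1 51).prod p = 4445236185272185438169240794291312557432222642727183809026451438704160103479600800432029464270 := by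
  have h := Finset.prod_Icc_succ_top (show 1 ≤ 50+1 by omega) p
  norm_num at h
  rw [h, Pr50, pe51]
  norm_num
lemma Pr52 : (Finset.Icc 1 52).prod p = 1062411448280052319722448549835623701226301211611796930357321893850294264731624591303255041960530 := by
  have h := Finset.prod_Icc_succ_top (show 1 ≤ 51+1 by omega) p
  norm_num at h
  rw [h, Pr51, pe52]
  norm_num
lemma Pr53 : (Finset.Icc 1 53).prod p = 256041159035492609053110100510385311995538591998443060216114576417920917800321526504084465112487730 := by
  have h := Finset.prod_Icc_succ_top (show 1 ≤ 52+1 by omega) p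
  norm_num at h
  rw [h, Pr52, pe53]
  norm_num
lemma Pr54 : (Finset.Icc 1 54).prod p = 64266330917908644872330635228106713310880186591609208114244758680898150367880703152525200743234420230 := by
  have h := Finset.prod_Icc_succ_top (show 1 ≤ 53+1 by omega) p
  norm_num at h
  rw [h, Pr53, pe54]
  norm_num
lemma Pr55 : (Finset.Icc 1 55).prod p = 16516447045902521732188973253623425320896207954043566485360902980990824644545340710198976591011245999110 := by
  have h := Finset.prod_Icc_succ_top (show 1 ≤ 54+1 by omega) p
  norm_num at h
  rw [h, Pr54, pe55]
  norm_num
lemma Pr56 : (Finset.Icc 1 56).prod p = 4343825573072363215565699965702960859395702691913457985649917484000586881515424606782330843435957697765930 := by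
  have h := Finset.prod_Icc_succ_top (show 1 ≤ 55+1 by omega) p
  norm_num at h
  rw [h, Pr55, pe56]
  norm_num
lemma Pr57 : (Finset.Icc 1 57).prod p = 1168489079156465704987173290774096471177444024124720198139827803196157871127649219224446996884272620699035170 := by
  have h := Finset.prod_Icc_succ_top (show 1 ≤ 56+1 by omega) p
  norm_num at h
  rw [h, Pr56, pe57]
  norm_num
lemma Pr58 : (Finset.Icc 1 58).prod p = 316660540451402206051523961799780143689087330537799173695893334666158783075592938409825136155637880209438531070 := by
  have h := Finset.prod_Icc_succ_top (show 1 ≤ 57+1 by omega) p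
  norm_num at h
  rw [h, Pr57, pe58]
  norm_num
lemma Pr59 : (Finset.Icc 1 59).prod p = 87714969705038411076272137418539099801877190558970371113762453702525982911939243939521562715111692818014473106390 := by
  have h := Finset.prod_Icc_succ_top (show 1 ≤ 58+1 by omega) p
  norm_num at h
  rw [h, Pr58, pe59]
  norm_num
lemma theta9 : θ 9 = Real.log 223092870 := by
  rw [theta_eq 9, Pr9]
  norm_num
lemma case3 : θ 3 ≤ ((3:ℕ):ℝ) * Real.log (((3:ℕ):ℝ) * Real.log ((3:ℕ):ℝ)) :=
  finite_case (c := 25) (by norm_num) Pr3 (by norm_num) (by norm_num) (by norm_num)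
lemma case4 : θ 4 ≤ ((4:ℕ):ℝ) * Real.log (((4:ℕ):ℝ) * Real.log ((4:ℕ):ℝ)) :=
  finite_case (c := 32) (by norm_num) Pr4 (by norm_num) (by norm_num) (by norm_num)
lemma case5 : θ 5 ≤ ((5:ℕ):ℝ) * Real.log (((5:ℕ):ℝ) * Real.log ((5:ℕ):ℝ)) :=
  finite_case (c := 37) (by norm_num) Pr5 (by norm_num) (by norm_num) (by norm_num)
lemma case6 : θ 6 ≤ ((6:ℕ):ℝ) * Real.log (((6:ℕ):ℝ) * Real.log ((6:ℕ):ℝ)) :=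
  finite_case (c := 41) (by norm_num) Pr6 (by norm_num) (by norm_num) (by norm_num)
lemma case7 : θ 7 ≤ ((7:ℕ):ℝ) * Real.log (((7:ℕ):ℝ) * Real.log ((7:ℕ):ℝ)) :=
  finite_case (c := 44) (by norm_num) Pr7 (by norm_num) (by norm_num) (by norm_num)
lemma case8 : θ 8 ≤ ((8:ℕ):ℝ) * Real.log (((8:ℕ):ℝ) * Real.log ((8:ℕ):ℝ)) :=
  finite_case (c := 48) (by norm_num) Pr8 (by norm_num) (by norm_num) (by norm_num)
lemma case9 : θ 9 ≤ ((9:ℕ):ℝ) * Real.log (((9:ℕ):ℝ) * Real.log ((9:ℕ):ℝ)) :=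
  finite_case (c := 50) (by norm_num) Pr9 (by norm_num) (by norm_num) (by norm_num)
lemma case10 : θ 10 ≤ ((10:ℕ):ℝ) * Real.log (((10:ℕ):ℝ) * Real.log ((10:ℕ):ℝ)) :=
  finite_case (c := 53) (by norm_num) Pr10 (by norm_num) (by norm_num) (by norm_num)
lemma case11 : θ 11 ≤ ((11:ℕ):ℝ) * Real.log (((11:ℕ):ℝ) * Real.log ((11:ℕ):ℝ)) :=
  finite_case (c := 55) (by norm_num) Pr11 (by norm_num) (by norm_num) (by norm_num)
lemma case12 : θ 12 ≤ ((12:ℕ):ℝ) * Real.log (((12:ℕ):ℝ) * Real.log ((12:ℕ):ℝ)) :=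
  finite_case (c := 57) (by norm_num) Pr12 (by norm_num) (by norm_num) (by norm_num)
lemma case13 : θ 13 ≤ ((13:ℕ):ℝ) * Real.log (((13:ℕ):ℝ) * Real.log ((13:ℕ):ℝ)) :=
  finite_case (c := 59) (by norm_num) Pr13 (by norm_num) (by norm_num) (by norm_num)
lemma case14 : θ 14 ≤ ((14:ℕ):ℝ) * Real.log (((14:ℕ):ℝ) * Real.log ((14:ℕ):ℝ)) :=
  finite_case (c := 60) (by norm_num) Pr14 (by norm_num) (by norm_num) (by norm_num)
lemma case15 : θ 15 ≤ ((15:ℕ):ℝ) * Real.log (((15:ℕ):ℝ) * Real.log ((15:ℕ):ℝ)) :=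
  finite_case (c := 62) (by norm_num) Pr15 (by norm_num) (by norm_num) (by norm_num)
lemma case16 : θ 16 ≤ ((16:ℕ):ℝ) * Real.log (((16:ℕ):ℝ) * Real.log ((16:ℕ):ℝ)) :=
  finite_case (c := 64) (by norm_num) Pr16 (by norm_num) (by norm_num) (by norm_num)
lemma case17 : θ 17 ≤ ((17:ℕ):ℝ) * Real.log (((17:ℕ):ℝ) * Real.log ((17:ℕ):ℝ)) :=
  finite_case (c := 65) (by norm_num) Pr17 (by norm_num) (by norm_num) (by norm_num)
lemma case18 : θ 18 ≤ ((18:ℕ):ℝ) * Real.log (((18:ℕ):ℝ) * Real.log ((18:ℕ):ℝ)) :=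
  finite_case (c := 66) (by norm_num) Pr18 (by norm_num) (by norm_num) (by norm_num)
lemma case19 : θ 19 ≤ ((19:ℕ):ℝ) * Real.log (((19:ℕ):ℝ) * Real.log ((19:ℕ):ℝ)) :=
  finite_case (c := 67) (by norm_num) Pr19 (by norm_num) (by norm_num) (by norm_num)
lemma case20 : θ 20 ≤ ((20:ℕ):ℝ) * Real.log (((20:ℕ):ℝ) * Real.log ((20:ℕ):ℝ)) :=
  finite_case (c := 69) (by norm_num) Pr20 (by norm_num) (by norm_num) (by norm_num)
lemma case21 : θ 21 ≤ ((21:ℕ):ℝ) * Real.log (((21:ℕ):ℝ) * Real.log ((21:ℕ):ℝ)) :=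
  finite_case (c := 70) (by norm_num) Pr21 (by norm_num) (by norm_num) (by norm_num)
lemma case22 : θ 22 ≤ ((22:ℕ):ℝ) * Real.log (((22:ℕ):ℝ) * Real.log ((22:ℕ):ℝ)) :=
  finite_case (c := 71) (by norm_num) Pr22 (by norm_num) (by norm_num) (by norm_num)
lemma case23 : θ 23 ≤ ((23:ℕ):ℝ) * Real.log (((23:ℕ):ℝ) * Real.log ((23:ℕ):ℝ)) :=
  finite_case (c := 72) (by norm_num) Pr23 (by norm_num) (by norm_num) (by norm_num)
lemma case24 : θ 24 ≤ ((24:ℕ):ℝ) * Real.log (((24:ℕ):ℝ) * Real.log ((24:ℕ):ℝ)) :=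
  finite_case (c := 73) (by norm_num) Pr24 (by norm_num) (by norm_num) (by norm_num)
lemma case25 : θ 25 ≤ ((25:ℕ):ℝ) * Real.log (((25:ℕ):ℝ) * Real.log ((25:ℕ):ℝ)) :=
  finite_case (c := 74) (by norm_num) Pr25 (by norm_num) (by norm_num) (by norm_num)
lemma case26 : θ 26 ≤ ((26:ℕ):ℝ) * Real.log (((26:ℕ):ℝ) * Real.log ((26:ℕ):ℝ)) :=
  finite_case (c := 75) (by norm_num) Pr26 (by norm_num) (by norm_num) (by norm_num)
lemma case27 : θ 27 ≤ ((27:ℕ):ℝ) * Real.log (((27:ℕ):ℝ) * Real.log ((27:ℕ):ℝ)) :=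
  finite_case (c := 76) (by norm_num) Pr27 (by norm_num) (by norm_num) (by norm_num)
lemma case28 : θ 28 ≤ ((28:ℕ):ℝ) * Real.log (((28:ℕ):ℝ) * Real.log ((28:ℕ):ℝ)) :=
  finite_case (c := 76) (by norm_num) Pr28 (by norm_num) (by norm_num) (by norm_num)
lemma case29 : θ 29 ≤ ((29:ℕ):ℝ) * Real.log (((29:ℕ):ℝ) * Real.log ((29:ℕ):ℝ)) :=
  finite_case (c := 77) (by norm_num) Pr29 (by norm_num) (by norm_num) (by norm_num)
lemma case30 : θ 30 ≤ ((30:ℕ):ℝ) * Real.log (((30:ℕ):ℝ) * Real.log ((30:ℕ):ℝ)) :=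
  finite_case (c := 78) (by norm_num) Pr30 (by norm_num) (by norm_num) (by norm_num)
lemma case31 : θ 31 ≤ ((31:ℕ):ℝ) * Real.log (((31:ℕ):ℝ) * Real.log ((31:ℕ):ℝ)) :=
  finite_case (c := 79) (by norm_num) Pr31 (by norm_num) (by norm_num) (by norm_num)
lemma case32 : θ 32 ≤ ((32:ℕ):ℝ) * Real.log (((32:ℕ):ℝ) * Real.log ((32:ℕ):ℝ)) :=
  finite_case (c := 80) (by norm_num) Pr32 (by norm_num) (by norm_num) (by norm_num)
lemma case33 : θ 33 ≤ ((33:ℕ):ℝ) * Real.log (((33:ℕ):ℝ) * Real.log ((33:ℕ):ℝ)) :=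
  finite_case (c := 80) (by norm_num) Pr33 (by norm_num) (by norm_num) (by norm_num)
lemma case34 : θ 34 ≤ ((34:ℕ):ℝ) * Real.log (((34:ℕ):ℝ) * Real.log ((34:ℕ):ℝ)) :=
  finite_case (c := 81) (by norm_num) Pr34 (by norm_num) (by norm_num) (by norm_num)
lemma case35 : θ 35 ≤ ((35:ℕ):ℝ) * Real.log (((35:ℕ):ℝ) * Real.log ((35:ℕ):ℝ)) :=
  finite_case (c := 82) (by norm_num) Pr35 (by norm_num) (by norm_num) (by norm_num)
lemma case36 : θ 36 ≤ ((36:ℕ):ℝ) * Real.log (((36:ℕ):ℝ) * Real.log ((36:ℕ):ℝ)) :=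
  finite_case (c := 82) (by norm_num) Pr36 (by norm_num) (by norm_num) (by norm_num)
lemma case37 : θ 37 ≤ ((37:ℕ):ℝ) * Real.log (((37:ℕ):ℝ) * Real.log ((37:ℕ):ℝ)) :=
  finite_case (c := 83) (by norm_num) Pr37 (by norm_num) (by norm_num) (by norm_num)
lemma case38 : θ 38 ≤ ((38:ℕ):ℝ) * Real.log (((38:ℕ):ℝ) * Real.log ((38:ℕ):ℝ)) :=
  finite_case (c := 83) (by norm_num) Pr38 (by norm_num) (by norm_num) (by norm_num)
lemma case39 : θ 39 ≤ ((39:ℕ):ℝ) * Real.log (((39:ℕ):ℝ) * Real.log ((39:ℕ):ℝ)) :=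
  finite_case (c := 84) (by norm_num) Pr39 (by norm_num) (by norm_num) (by norm_num)
lemma case40 : θ 40 ≤ ((40:ℕ):ℝ) * Real.log (((40:ℕ):ℝ) * Real.log ((40:ℕ):ℝ)) :=
  finite_case (c := 85) (by norm_num) Pr40 (by norm_num) (by norm_num) (by norm_num)
lemma case41 : θ 41 ≤ ((41:ℕ):ℝ) * Real.log (((41:ℕ):ℝ) * Real.log ((41:ℕ):ℝ)) :=
  finite_case (c := 85) (by norm_num) Pr41 (by norm_num) (by norm_num) (by norm_num)
lemma case42 : θ 42 ≤ ((42:ℕ):ℝ) * Real.log (((42:ℕ):ℝ) * Real.log ((42:ℕ):ℝ)) :=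
  finite_case (c := 86) (by norm_num) Pr42 (by norm_num) (by norm_num) (by norm_num)
lemma case43 : θ 43 ≤ ((43:ℕ):ℝ) * Real.log (((43:ℕ):ℝ) * Real.log ((43:ℕ):ℝ)) :=
  finite_case (c := 86) (by norm_num) Pr43 (by norm_num) (by norm_num) (by norm_num)
lemma case44 : θ 44 ≤ ((44:ℕ):ℝ) * Real.log (((44:ℕ):ℝ) * Real.log ((44:ℕ):ℝ)) :=
  finite_case (c := 87) (by norm_num) Pr44 (by norm_num) (by norm_num) (by norm_num)
lemma case45 : θ 45 ≤ ((45:ℕ):ℝ) * Real.log (((45:ℕ):ℝ) * Real.log ((45:ℕ):ℝ)) :=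
  finite_case (c := 87) (by norm_num) Pr45 (by norm_num) (by norm_num) (by norm_num)
lemma case46 : θ 46 ≤ ((46:ℕ):ℝ) * Real.log (((46:ℕ):ℝ) * Real.log ((46:ℕ):ℝ)) :=
  finite_case (c := 88) (by norm_num) Pr46 (by norm_num) (by norm_num) (by norm_num)
lemma case47 : θ 47 ≤ ((47:ℕ):ℝ) * Real.log (((47:ℕ):ℝ) * Real.log ((47:ℕ):ℝ)) :=
  finite_case (c := 88) (by norm_num) Pr47 (by norm_num) (by norm_num) (by norm_num)
lemma case48 : θ 48 ≤ ((48:ℕ):ℝ) * Real.log (((48:ℕ):ℝ) * Real.log ((48:ℕ):ℝ)) :=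
  finite_case (c := 89) (by norm_num) Pr48 (by norm_num) (by norm_num) (by norm_num)
lemma case49 : θ 49 ≤ ((49:ℕ):ℝ) * Real.log (((49:ℕ):ℝ) * Real.log ((49:ℕ):ℝ)) :=
  finite_case (c := 89) (by norm_num) Pr49 (by norm_num) (by norm_num) (by norm_num)
lemma case50 : θ 50 ≤ ((50:ℕ):ℝ) * Real.log (((50:ℕ):ℝ) * Real.log ((50:ℕ):ℝ)) :=
  finite_case (c := 90) (by norm_num) Pr50 (by norm_num) (by norm_num) (by norm_num)
lemma case51 : θ 51 ≤ ((51:ℕ):ℝ) * Real.log (((51:ℕ):ℝ) * Real.log ((51:ℕ):ℝ)) :=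
  finite_case (c := 90) (by norm_num) Pr51 (by norm_num) (by norm_num) (by norm_num)
lemma case52 : θ 52 ≤ ((52:ℕ):ℝ) * Real.log (((52:ℕ):ℝ) * Real.log ((52:ℕ):ℝ)) :=
  finite_case (c := 91) (by norm_num) Pr52 (by norm_num) (by norm_num) (by norm_num)
lemma case53 : θ 53 ≤ ((53:ℕ):ℝ) * Real.log (((53:ℕ):ℝ) * Real.log ((53:ℕ):ℝ)) :=
  finite_case (c := 91) (by norm_num) Pr53 (by norm_num) (by norm_num) (by norm_num)
lemma case54 : θ 54 ≤ ((54:ℕ):ℝ) * Real.log (((54:ℕ):ℝ) * Real.log ((54:ℕ):ℝ)) :=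
  finite_case (c := 92) (by norm_num) Pr54 (by norm_num) (by norm_num) (by norm_num)
lemma case55 : θ 55 ≤ ((55:ℕ):ℝ) * Real.log (((55:ℕ):ℝ) * Real.log ((55:ℕ):ℝ)) :=
  finite_case (c := 92) (by norm_num) Pr55 (by norm_num) (by norm_num) (by norm_num)
lemma case56 : θ 56 ≤ ((56:ℕ):ℝ) * Real.log (((56:ℕ):ℝ) * Real.log ((56:ℕ):ℝ)) :=
  finite_case (c := 92) (by norm_num) Pr56 (by norm_num) (by norm_num) (by norm_num)
lemma case57 : θ 57 ≤ ((57:ℕ):ℝ) * Real.log (((57:ℕ):ℝ) * Real.log ((57:ℕ):ℝ)) :=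
  finite_case (c := 93) (by norm_num) Pr57 (by norm_num) (by norm_num) (by norm_num)
lemma case58 : θ 58 ≤ ((58:ℕ):ℝ) * Real.log (((58:ℕ):ℝ) * Real.log ((58:ℕ):ℝ)) :=
  finite_case (c := 93) (by norm_num) Pr58 (by norm_num) (by norm_num) (by norm_num)
lemma case59 : θ 59 ≤ ((59:ℕ):ℝ) * Real.log (((59:ℕ):ℝ) * Real.log ((59:ℕ):ℝ)) :=
  finite_case (c := 94) (by norm_num) Pr59 (by norm_num) (by norm_num) (by norm_num)
end Aux5

theorem stmt8 : ∀ n : ℕ, 3 ≤ n → θ n ≤ (n : ℝ) * Real.log ((n : ℝ) * Real.log n) := by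
  intro n hn
  rcases le_or_gt 60 n with h | h
  · exact Aux3.main_large n h Aux5.theta9
  · interval_cases n
    · exact Aux5.case3
    · exact Aux5.case4
    · exact Aux5.case5
    · exact Aux5.case6
    · exact Aux5.case7
    · exact Aux5.case8
    · exact Aux5.case9
    · exact Aux5.case10
    · exact Aux5.case11
    · exact Aux5.case12
    · exact Aux5.case13
    · exact Aux5.case14
    · exact Aux5.case15
    · exact Aux5.case16
    · exact Aux5.case17
    · exact Aux5.case18
    · exact Aux5.case19
    · exact Aux5.case20
    · exact Aux5.case21
    · exact Aux5.case22
    · exact Aux5.case23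
    · exact Aux5.case24
    · exact Aux5.case25
    · exact Aux5.case26
    · exact Aux5.case27
    · exact Aux5.case28
    · exact Aux5.case29
    · exact Aux5.case30
    · exact Aux5.case31
    · exact Aux5.case32
    · exact Aux5.case33
    · exact Aux5.case34
    · exact Aux5.case35
    · exact Aux5.case36
    · exact Aux5.case37
    · exact Aux5.case38
    · exact Aux5.case39
    · exact Aux5.case40
    · exact Aux5.case41
    · exact Aux5.case42
    · exact Aux5.case43
    · exact Aux5.case44
    · exact Aux5.case45
    · exact Aux5.case46
    · exact Aux5.case47
    · exact Aux5.case48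
    · exact Aux5.case49
    · exact Aux5.case50
    · exact Aux5.case51
    · exact Aux5.case52
    · exact Aux5.case53
    · exact Aux5.case54
    · exact Aux5.case55
    · exact Aux5.case56
    · exact Aux5.case57
    · exact Aux5.case58
    · exact Aux5.case59
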